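/- Let w_hat : [n] → ℝ be random estimators on a probability space with E[ŵ_i] = w_i for all i, and for I ⊆ [n] define ŵ_I = ∑_{i∈I} ŵ_i. If I is a uniformly random subset of [n] of size m (with 1 ≤ m ≤ n, n ≥ 2), then the expected variance satisfies E_I[Var[ŵ_I]] = (m/n)·((n−m)/(n−1)·∑_{i∈[n]} Var[ŵ_i] + (m−1)/(n−1)·Var[ŵ_{[n]}]). -/

import Mathlib

open MeasureTheory ProbabilityTheory Finset

lemma count_contain {α : Type*} [DecidableEq α] (s t : Finset α) (k : ℕ)
    (ht : t ⊆ s) (hk : t.card ≤ k) :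
    ((s.powersetCard k).filter (fun I => t ⊆ I)).card
      = (s.card - t.card).choose (k - t.card) := by
  rw [← Finset.card_sdiff_of_subset ht, ← Finset.card_powersetCard]
  apply Finset.card_bij' (fun I _ => I \ t) (fun J _ => J ∪ t)
  · intro I hI
    simp only [Finset.mem_filter, Finset.mem_powersetCard] at hI
    obtain ⟨⟨hIs, hIc⟩, htI⟩ := hI
    simp only [Finset.mem_powersetCard]
    exact ⟨Finset.sdiff_subset_sdiff hIs le_rfl, by rw [Finset.card_sdiff_of_subset htI, hIc]⟩
  · intro J hJ
    simp only [Finset.mem_powersetCard] at hJ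
    obtain ⟨hJs, hJc⟩ := hJ
    have hdisj : Disjoint J t := Finset.disjoint_of_subset_left hJs Finset.sdiff_disjoint
    simp only [Finset.mem_filter, Finset.mem_powersetCard]
    refine ⟨⟨Finset.union_subset (hJs.trans Finset.sdiff_subset) ht, ?_⟩,
      Finset.subset_union_right⟩
    rw [Finset.card_union_of_disjoint hdisj, hJc]
    omega
  · intro I hI
    simp only [Finset.mem_filter] at hI
    exact Finset.sdiff_union_of_subset hI.2
  · intro J hJ
    simp only [Finset.mem_powersetCard] at hJ
    have hdisj : Disjoint J t := Finset.disjoint_of_subset_left hJ.1 Finset.sdiff_disjoint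
    exact Finset.union_sdiff_cancel_right hdisj

lemma choose_id1 (n m : ℕ) (hn : 1 ≤ n) (hm : 1 ≤ m) :
    n * (n - 1).choose (m - 1) = n.choose m * m := by
  obtain ⟨a, rfl⟩ := Nat.exists_eq_succ_of_ne_zero (Nat.one_le_iff_ne_zero.mp hn)
  obtain ⟨b, rfl⟩ := Nat.exists_eq_succ_of_ne_zero (Nat.one_le_iff_ne_zero.mp hm)
  simpa using Nat.add_one_mul_choose_eq a b

lemma choose_id2 (n m : ℕ) (hn : 2 ≤ n) (hm : 2 ≤ m) :
    n * (n - 1) * (n - 2).choose (m - 2) = n.choose m * (m * (m - 1)) := by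
  have h1 : (n - 1) * (n - 2).choose (m - 2) = (n - 1).choose (m - 1) * (m - 1) := by
    have := choose_id1 (n - 1) (m - 1) (by omega) (by omega)
    simpa [Nat.sub_sub] using this
  have h2 : n * (n - 1).choose (m - 1) = n.choose m * m := choose_id1 n m (by omega) (by omega)
  calc n * (n - 1) * (n - 2).choose (m - 2) = n * ((n - 1) * (n - 2).choose (m - 2)) := by ring
    _ = n * ((n - 1).choose (m - 1) * (m - 1)) := by rw [h1]
    _ = (n * (n - 1).choose (m - 1)) * (m - 1) := by ring
    _ = n.choose m * m * (m - 1) := by rw [h2]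
    _ = n.choose m * (m * (m - 1)) := by ring

theorem avg_variance_subset_size_m
    {Ω : Type*} [MeasurableSpace Ω] (μ : Measure Ω) [IsProbabilityMeasure μ]
    (n m : ℕ) (hn : 2 ≤ n) (hm1 : 1 ≤ m) (hmn : m ≤ n)
    (w : Fin n → ℝ) (what : Fin n → Ω → ℝ)
    (hL2 : ∀ i, MemLp (what i) 2 μ)
    (hunb : ∀ i, ∫ ω, what i ω ∂μ = w i) :
    (∑ I ∈ (Finset.univ : Finset (Fin n)).powersetCard m,
        variance (fun ω => ∑ i ∈ I, what i ω) μ) / (n.choose m : ℝ)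
      = ((m : ℝ) / n) *
        (((n : ℝ) - m) / ((n : ℝ) - 1) * ∑ i, variance (what i) μ
          + ((m : ℝ) - 1) / ((n : ℝ) - 1) *
              variance (fun ω => ∑ i, what i ω) μ) := by
  classical
  have hmul : ∀ i j : Fin n, Integrable (fun ω => what i ω * what j ω) μ := by
    intro i j
    have h := ((hL2 j).smul (hL2 i) (p := 2) (q := 2) (r := 1)).integrable le_rfl
    exact h
  have hint : ∀ i : Fin n, Integrable (what i) μ := fun i => (hL2 i).integrable one_le_two
  set cov : Fin n → Fin n → ℝ := fun i j =>
    (∫ ω, what i ω * what j ω ∂μ) - (∫ ω, what i ω ∂μ) * (∫ ω, what j ω ∂μ) with hcov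
  have varsum : ∀ s : Finset (Fin n),
      variance (fun ω => ∑ i ∈ s, what i ω) μ = ∑ i ∈ s, ∑ j ∈ s, cov i j := by
    intro s
    have hs2 : MemLp (fun ω => ∑ i ∈ s, what i ω) 2 μ := by
      have h := memLp_finset_sum' s (fun i (_ : i ∈ s) => hL2 i)
      convert h using 1
      ext ω
      simp
    rw [variance_eq_sub hs2]
    have e1 : ∫ ω, (∑ i ∈ s, what i ω) ^ 2 ∂μ
        = ∑ i ∈ s, ∑ j ∈ s, ∫ ω, what i ω * what j ω ∂μ := by
      have hpt : ∀ ω, (∑ i ∈ s, what i ω) ^ 2 = ∑ i ∈ s, ∑ j ∈ s, what i ω * what j ω := by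
        intro ω; rw [sq, Finset.sum_mul_sum]
      simp_rw [hpt]
      rw [integral_finset_sum _ (fun i _ => integrable_finset_sum _ (fun j _ => hmul i j))]
      exact Finset.sum_congr rfl (fun i _ => integral_finset_sum _ (fun j _ => hmul i j))
    have e2 : ∫ ω, (∑ i ∈ s, what i ω) ∂μ = ∑ i ∈ s, ∫ ω, what i ω ∂μ :=
      integral_finset_sum _ (fun i _ => hint i)
    simp only [Pi.pow_apply]
    rw [e1, e2, sq, Finset.sum_mul_sum, ← Finset.sum_sub_distrib]
    exact Finset.sum_congr rfl fun i _ => (Finset.sum_sub_distrib _ _).symm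
  have hvari : ∀ i, variance (what i) μ = cov i i := by
    intro i
    rw [variance_eq_sub (hL2 i)]
    simp only [hcov, Pi.pow_apply, sq]
  set S1 : ℝ := ∑ i, cov i i with hS1
  set S2 : ℝ := ∑ i, ∑ j, cov i j with hS2
  set C : ℝ := (n.choose m : ℝ) with hC
  have hCpos : 0 < C := by
    have := Nat.choose_pos hmn
    positivity
  set Ar : ℝ := C * m / n with hAr
  set Br : ℝ := C * ((m : ℝ) * ((m : ℝ) - 1)) / ((n : ℝ) * ((n : ℝ) - 1)) with hBr
  have hnR : (0:ℝ) < (n:ℝ) := by positivity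
  have hn1R : (0:ℝ) < (n:ℝ) - 1 := by
    have : (2:ℝ) ≤ n := by exact_mod_cast hn
    linarith
  have hcount : ∀ i j : Fin n,
      (((Finset.univ.powersetCard m).filter (fun I => i ∈ I ∧ j ∈ I)).card : ℝ)
        = if i = j then Ar else Br := by
    intro i j
    by_cases hij : i = j
    · subst hij
      rw [if_pos rfl]
      have hfil : (Finset.univ.powersetCard m).filter (fun I => i ∈ I ∧ i ∈ I)
          = (Finset.univ.powersetCard m).filter (fun I => ({i} : Finset (Fin n)) ⊆ I) := by
        apply Finset.filter_congr; intro I _; simp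
      rw [hfil, count_contain _ _ _ (by simp) (by simpa using hm1)]
      simp only [Finset.card_univ, Fintype.card_fin, Finset.card_singleton]
      have hid : (n:ℝ) * (((n-1).choose (m-1) : ℕ) : ℝ) = C * m := by
        have h := congrArg (fun x : ℕ => (x : ℝ)) (choose_id1 n m (by omega) hm1)
        push_cast at h
        simpa [hC] using h
      rw [hAr, eq_div_iff (ne_of_gt hnR)]
      linarith [hid]
    · rw [if_neg hij]
      have hfil : (Finset.univ.powersetCard m).filter (fun I => i ∈ I ∧ j ∈ I)
          = (Finset.univ.powersetCard m).filter (fun I => ({i, j} : Finset (Fin n)) ⊆ I) := by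
        apply Finset.filter_congr; intro I _; simp [Finset.insert_subset_iff]
      have hcard2 : ({i, j} : Finset (Fin n)).card = 2 := Finset.card_pair hij
      by_cases hm2 : 2 ≤ m
      · rw [hfil, count_contain _ _ _ (by simp) (by omega)]
        simp only [Finset.card_univ, Fintype.card_fin, hcard2]
        have hid : (n:ℝ) * ((n:ℝ) - 1) * (((n-2).choose (m-2) : ℕ) : ℝ)
            = C * ((m:ℝ) * ((m:ℝ) - 1)) := by
          have h := congrArg (fun x : ℕ => (x : ℝ)) (choose_id2 n m hn hm2)
          push_cast at h
          rw [Nat.cast_sub (by omega : 1 ≤ n), Nat.cast_sub (by omega : 1 ≤ m)] at h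
          push_cast at h
          simpa [hC] using h
        rw [hBr, eq_div_iff (by positivity : ((n:ℝ) * ((n:ℝ) - 1)) ≠ 0)]
        linarith [hid]
      · have hm : m = 1 := by omega
        subst hm
        have hemp : (Finset.univ.powersetCard 1).filter
            (fun I => ({i, j} : Finset (Fin n)) ⊆ I) = ∅ := by
          apply Finset.filter_false_of_mem
          intro I hI
          rw [Finset.mem_powersetCard] at hI
          intro hsub
          have := Finset.card_le_card hsub
          omega
        rw [hfil, hemp]
        simp [hBr]
  have key : (∑ I ∈ (Finset.univ : Finset (Fin n)).powersetCard m,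
        variance (fun ω => ∑ i ∈ I, what i ω) μ) = Br * S2 + (Ar - Br) * S1 := by
    have step1 : ∀ I : Finset (Fin n),
        (∑ i ∈ I, ∑ j ∈ I, cov i j)
          = ∑ i, ∑ j, (if i ∈ I ∧ j ∈ I then cov i j else 0) := by
      intro I
      have h2 : ∀ i, (∑ j, if i ∈ I ∧ j ∈ I then cov i j else 0)
          = if i ∈ I then ∑ j ∈ I, cov i j else 0 := by
        intro i
        by_cases h : i ∈ I
        · rw [if_pos h]
          simp only [h, true_and]
          rw [Finset.sum_ite_mem, Finset.univ_inter]
        · simp [h]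
      simp_rw [h2]
      rw [Finset.sum_ite_mem, Finset.univ_inter]
    calc (∑ I ∈ (Finset.univ : Finset (Fin n)).powersetCard m,
          variance (fun ω => ∑ i ∈ I, what i ω) μ)
        = ∑ I ∈ Finset.univ.powersetCard m,
            ∑ i, ∑ j, (if i ∈ I ∧ j ∈ I then cov i j else 0) := by
          exact Finset.sum_congr rfl fun I _ => (varsum I).trans (step1 I)
      _ = ∑ i, ∑ j, ∑ I ∈ Finset.univ.powersetCard m,
            (if i ∈ I ∧ j ∈ I then cov i j else 0) := by
          rw [Finset.sum_comm]
          exact Finset.sum_congr rfl fun i _ => Finset.sum_comm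
      _ = ∑ i, ∑ j, (if i = j then Ar else Br) * cov i j := by
          refine Finset.sum_congr rfl fun i _ => Finset.sum_congr rfl fun j _ => ?_
          rw [← Finset.sum_filter, Finset.sum_const, nsmul_eq_mul, hcount i j]
      _ = ∑ i, ∑ j, (Br * cov i j + if i = j then (Ar - Br) * cov i j else 0) := by
          refine Finset.sum_congr rfl fun i _ => Finset.sum_congr rfl fun j _ => ?_
          by_cases h : i = j
          · rw [if_pos h, if_pos h]; ring
          · rw [if_neg h, if_neg h]; ring
      _ = Br * S2 + (Ar - Br) * S1 := by
          have hinner : ∀ i : Fin n,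
              (∑ j, (Br * cov i j + if i = j then (Ar - Br) * cov i j else 0))
                = Br * (∑ j, cov i j) + (Ar - Br) * cov i i := by
            intro i
            rw [Finset.sum_add_distrib, ← Finset.mul_sum, Finset.sum_ite_eq]
            simp
          simp_rw [hinner]
          rw [Finset.sum_add_distrib, ← Finset.mul_sum, ← Finset.mul_sum, ← hS1, ← hS2]
  have hsum1 : (∑ i, variance (what i) μ) = S1 :=
    Finset.sum_congr rfl fun i _ => hvari i
  have hsum2 : variance (fun ω => ∑ i, what i ω) μ = S2 := varsum Finset.univ
  rw [key, hsum1, hsum2, hAr, hBr]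
  have hmR : ((m:ℝ)) ≥ 0 := by positivity
  field_simp
  ring
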